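/- Let K be a field of characteristic zero, let M = Σ_{i=0}^r p_i ∂^i with p_i ∈ K[x], let L ∈ K[x]⟨∂⟩, and suppose A ∈ K(x)⟨∂⟩ of order at most r−1 satisfies M∘A = B∘L for some B ∈ K(x)⟨∂⟩, where L has order r. Let α ∈ K̄ be a point that is a singularity of neither M nor L (neither leading coefficient vanishes at α and all coefficients are regular at α, with L's indicial polynomial at α having roots exactly 0,1,…,r−1). Then no coefficient of A has a pole at α. -/

import Mathlib

open Polynomial

/-- The derivative of a rational function, `(p/q)' = (p'q − pq')/q²`. -/
noncomputable def ratDeriv {K : Type*} [Field K] (f : RatFunc K) : RatFunc K :=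
  (algebraMap K[X] (RatFunc K) (derivative f.num) * algebraMap K[X] (RatFunc K) f.denom -
      algebraMap K[X] (RatFunc K) f.num * algebraMap K[X] (RatFunc K) (derivative f.denom)) /
    algebraMap K[X] (RatFunc K) (f.denom ^ 2)

/-- The action of the differential operator `M = ∑_{i=0}^r pᵢ ∂ⁱ` (with polynomial
coefficients `pᵢ`) on a rational function. -/
noncomputable def applyOp {K : Type*} [Field K] (r : ℕ) (p : ℕ → K[X]) (f : RatFunc K) :
    RatFunc K :=
  ∑ i ∈ Finset.range (r + 1), algebraMap K[X] (RatFunc K) (p i) * ratDeriv^[i] f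

/-- `f` has no pole at `α`. -/
def regAt {K : Type*} [Field K] (α : K) (f : RatFunc K) : Prop :=
  Polynomial.eval α f.denom ≠ 0

/-- `ord_α f ≥ m` : the valuation of `f` at `α` (as a Laurent series in `x − α`)
is at least `m`. -/
def ordGe {K : Type*} [Field K] (α : K) (m : ℤ) (f : RatFunc K) : Prop :=
  regAt α ((RatFunc.X - RatFunc.C α) ^ (-m) * f)

/-- `f` has degree (order at infinity, negated) at most `m`, i.e. `ord_∞ f ≥ −m`. -/
def degLe {K : Type*} [Field K] (m : ℤ) (f : RatFunc K) : Prop :=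
  f = 0 ∨ RatFunc.intDegree f ≤ m

section Aux

variable {K : Type*} [Field K]


theorem ratDeriv_div (p q : K[X]) (hq : q ≠ 0) :
    ratDeriv (algebraMap K[X] (RatFunc K) p / algebraMap K[X] (RatFunc K) q) =
      algebraMap K[X] (RatFunc K) (derivative p * q - p * derivative q) /
        algebraMap K[X] (RatFunc K) (q ^ 2) := by
  set f := algebraMap K[X] (RatFunc K) p / algebraMap K[X] (RatFunc K) q with hf
  have hd : f.denom ≠ 0 := f.denom_ne_zero
  have hnd : algebraMap K[X] (RatFunc K) f.num / algebraMap K[X] (RatFunc K) f.denom = f :=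
    f.num_div_denom
  have hE : p * f.denom = f.num * q := by
    have h1 : algebraMap K[X] (RatFunc K) p * algebraMap K[X] (RatFunc K) f.denom
        = algebraMap K[X] (RatFunc K) f.num * algebraMap K[X] (RatFunc K) q := by
      rw [← div_eq_div_iff (RatFunc.algebraMap_ne_zero hq) (RatFunc.algebraMap_ne_zero hd)]
      rw [hnd, hf]
    exact RatFunc.algebraMap_injective K (by rw [map_mul, map_mul]; exact h1)
  have hE' : derivative p * f.denom + p * derivative f.denom
      = derivative f.num * q + f.num * derivative q := by
    have := congrArg derivative hE
    rwa [derivative_mul, derivative_mul] at this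
  rw [ratDeriv]
  rw [div_eq_div_iff (RatFunc.algebraMap_ne_zero (pow_ne_zero 2 hd))
    (RatFunc.algebraMap_ne_zero (pow_ne_zero 2 hq))]
  simp only [← map_mul, ← map_sub, ← map_pow]
  refine congrArg _ ?_
  linear_combination (derivative f.denom * q + derivative q * f.denom) * hE +
    (-(q * f.denom)) * hE'

theorem ratDeriv_algebraMap (p : K[X]) :
    ratDeriv (algebraMap K[X] (RatFunc K) p) = algebraMap K[X] (RatFunc K) (derivative p) := by
  have := ratDeriv_div p 1 one_ne_zero
  simpa using this

theorem ratDeriv_add (f g : RatFunc K) : ratDeriv (f + g) = ratDeriv f + ratDeriv g := by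
  obtain ⟨p1, q1, hq1, rfl⟩ : ∃ p q, q ≠ 0 ∧
      f = algebraMap K[X] (RatFunc K) p / algebraMap K[X] (RatFunc K) q :=
    ⟨f.num, f.denom, f.denom_ne_zero, f.num_div_denom.symm⟩
  obtain ⟨p2, q2, hq2, rfl⟩ : ∃ p q, q ≠ 0 ∧
      g = algebraMap K[X] (RatFunc K) p / algebraMap K[X] (RatFunc K) q :=
    ⟨g.num, g.denom, g.denom_ne_zero, g.num_div_denom.symm⟩
  rw [div_add_div _ _ (RatFunc.algebraMap_ne_zero hq1) (RatFunc.algebraMap_ne_zero hq2),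
    ← map_mul, ← map_mul, ← map_mul, ← map_add, ratDeriv_div _ _ (mul_ne_zero hq1 hq2),
    ratDeriv_div _ _ hq1, ratDeriv_div _ _ hq2]
  rw [div_add_div _ _ (RatFunc.algebraMap_ne_zero (pow_ne_zero 2 hq1))
    (RatFunc.algebraMap_ne_zero (pow_ne_zero 2 hq2)),
    ← map_mul, ← map_mul, ← map_mul, ← map_add,
    div_eq_div_iff (RatFunc.algebraMap_ne_zero (pow_ne_zero 2 (mul_ne_zero hq1 hq2)))
      (RatFunc.algebraMap_ne_zero (mul_ne_zero (pow_ne_zero 2 hq1) (pow_ne_zero 2 hq2))),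
    ← map_mul, ← map_mul]
  refine congrArg _ ?_
  simp only [derivative_add, derivative_mul]
  ring

theorem ratDeriv_mul (f g : RatFunc K) :
    ratDeriv (f * g) = ratDeriv f * g + f * ratDeriv g := by
  obtain ⟨p1, q1, hq1, rfl⟩ : ∃ p q, q ≠ 0 ∧
      f = algebraMap K[X] (RatFunc K) p / algebraMap K[X] (RatFunc K) q :=
    ⟨f.num, f.denom, f.denom_ne_zero, f.num_div_denom.symm⟩
  obtain ⟨p2, q2, hq2, rfl⟩ : ∃ p q, q ≠ 0 ∧
      g = algebraMap K[X] (RatFunc K) p / algebraMap K[X] (RatFunc K) q :=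
    ⟨g.num, g.denom, g.denom_ne_zero, g.num_div_denom.symm⟩
  rw [div_mul_div_comm, ← map_mul, ← map_mul, ratDeriv_div _ _ (mul_ne_zero hq1 hq2),
    ratDeriv_div _ _ hq1, ratDeriv_div _ _ hq2]
  have h1 : algebraMap K[X] (RatFunc K) q1 ≠ 0 := RatFunc.algebraMap_ne_zero hq1
  have h2 : algebraMap K[X] (RatFunc K) q2 ≠ 0 := RatFunc.algebraMap_ne_zero hq2
  have h12 : algebraMap K[X] (RatFunc K) ((q1 * q2) ^ 2) ≠ 0 :=
    RatFunc.algebraMap_ne_zero (pow_ne_zero 2 (mul_ne_zero hq1 hq2))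
  have h1' : algebraMap K[X] (RatFunc K) (q1 ^ 2) ≠ 0 :=
    RatFunc.algebraMap_ne_zero (pow_ne_zero 2 hq1)
  have h2' : algebraMap K[X] (RatFunc K) (q2 ^ 2) ≠ 0 :=
    RatFunc.algebraMap_ne_zero (pow_ne_zero 2 hq2)
  field_simp
  simp only [← map_mul, ← map_sub, ← map_pow, ← map_add]
  exact congrArg _ (by simp only [derivative_mul]; ring)

noncomputable def zR {K : Type*} [Field K] (α : K) : RatFunc K :=
  algebraMap K[X] (RatFunc K) (X - C α)

/-- `f = (x-α)^m (p/q)` with `q(α) ≠ 0` and `c = p(α)/q(α)`. -/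
def Lead {K : Type*} [Field K] (α : K) (m : ℤ) (c : K) (f : RatFunc K) : Prop :=
  ∃ p q : K[X], q.eval α ≠ 0 ∧
    f = zR α ^ m * (algebraMap K[X] (RatFunc K) p / algebraMap K[X] (RatFunc K) q) ∧
    c * q.eval α = p.eval α

variable {K : Type*} [Field K]

lemma zR_ne_zero (α : K) : zR α ≠ 0 :=
  RatFunc.algebraMap_ne_zero (X_sub_C_ne_zero α)

lemma lead_zero (α : K) (m : ℤ) : Lead α m 0 (0 : RatFunc K) :=
  ⟨0, 1, by simp, by simp, by simp⟩

lemma lead_add {α : K} {m : ℤ} {c d : K} {f g : RatFunc K}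
    (hf : Lead α m c f) (hg : Lead α m d g) : Lead α m (c + d) (f + g) := by
  obtain ⟨p1, q1, hq1, hf1, hc1⟩ := hf
  obtain ⟨p2, q2, hq2, hf2, hc2⟩ := hg
  refine ⟨p1 * q2 + q1 * p2, q1 * q2, by simp [hq1, hq2], ?_, ?_⟩
  · have hq1' : algebraMap K[X] (RatFunc K) q1 ≠ 0 :=
      RatFunc.algebraMap_ne_zero (fun h => hq1 (by simp [h]))
    have hq2' : algebraMap K[X] (RatFunc K) q2 ≠ 0 :=
      RatFunc.algebraMap_ne_zero (fun h => hq2 (by simp [h]))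
    rw [hf1, hf2, ← mul_add]
    congr 1
    rw [div_add_div _ _ hq1' hq2', ← map_mul, ← map_mul, ← map_mul, ← map_add]
  · simp only [eval_add, eval_mul]
    linear_combination q2.eval α * hc1 + q1.eval α * hc2

lemma lead_mul {α : K} {m m' : ℤ} {c d : K} {f g : RatFunc K}
    (hf : Lead α m c f) (hg : Lead α m' d g) : Lead α (m + m') (c * d) (f * g) := by
  obtain ⟨p1, q1, hq1, hf1, hc1⟩ := hf
  obtain ⟨p2, q2, hq2, hf2, hc2⟩ := hg
  refine ⟨p1 * p2, q1 * q2, by simp [hq1, hq2], ?_, ?_⟩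
  · rw [hf1, hf2, zpow_add₀ (zR_ne_zero α), map_mul, map_mul, ← div_mul_div_comm]
    ring
  · simp only [eval_mul]
    linear_combination (d * q2.eval α) * hc1 + (p1.eval α) * hc2

lemma lead_weaken {α : K} {m m' : ℤ} {c : K} {f : RatFunc K}
    (hf : Lead α m' c f) (h : m < m') : Lead α m 0 f := by
  obtain ⟨p, q, hq, hf1, hc⟩ := hf
  set k := (m' - m).toNat with hk
  have hk1 : 1 ≤ k := by omega
  have hmk : m' = m + (k : ℤ) := by omega
  refine ⟨(X - C α) ^ k * p, q, hq, ?_, ?_⟩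
  · rw [hf1, hmk, zpow_add₀ (zR_ne_zero α), map_mul, map_pow, zpow_natCast, zR]
    ring
  · simp only [eval_mul, eval_pow, eval_sub, eval_X, eval_C, sub_self, zero_mul]
    rw [zero_pow (by omega : k ≠ 0)]
    ring

lemma lead_le {α : K} {m m' : ℤ} {c : K} {f : RatFunc K}
    (hf : Lead α m' c f) (h : m ≤ m') : ∃ d, Lead α m d f := by
  rcases eq_or_lt_of_le h with rfl | h
  · exact ⟨c, hf⟩
  · exact ⟨0, lead_weaken hf h⟩

lemma lead_contra {α : K} {m : ℤ} {c d : K} {f : RatFunc K}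
    (h1 : Lead α m c f) (h2 : Lead α (m + 1) d f) : c = 0 := by
  obtain ⟨p1, q1, hq1, hf1, hc1⟩ := h1
  obtain ⟨p2, q2, hq2, hf2, hc2⟩ := h2
  have hz := zR_ne_zero α
  have key : algebraMap K[X] (RatFunc K) p1 / algebraMap K[X] (RatFunc K) q1 =
      zR α * (algebraMap K[X] (RatFunc K) p2 / algebraMap K[X] (RatFunc K) q2) := by
    have := hf1.symm.trans hf2
    rw [zpow_add_one₀ hz] at this
    have h' : zR α ^ m * (algebraMap K[X] (RatFunc K) p1 / algebraMap K[X] (RatFunc K) q1) =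
        zR α ^ m * (zR α * (algebraMap K[X] (RatFunc K) p2 / algebraMap K[X] (RatFunc K) q2)) := by
      rw [this]; ring
    exact mul_left_cancel₀ (zpow_ne_zero m hz) h'
  have hq1' : algebraMap K[X] (RatFunc K) q1 ≠ 0 :=
    RatFunc.algebraMap_ne_zero (fun h => hq1 (by simp [h]))
  have hq2' : algebraMap K[X] (RatFunc K) q2 ≠ 0 :=
    RatFunc.algebraMap_ne_zero (fun h => hq2 (by simp [h]))
  rw [zR, mul_div_assoc'] at key
  rw [div_eq_div_iff hq1' hq2'] at key
  have key2 : p1 * q2 = (X - C α) * p2 * q1 := by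
    apply RatFunc.algebraMap_injective K
    rw [map_mul, map_mul, map_mul]
    linear_combination key
  have := congrArg (Polynomial.eval α) key2
  simp only [eval_mul, eval_sub, eval_X, eval_C, sub_self, zero_mul] at this
  have hp1 : p1.eval α = 0 := by
    rcases mul_eq_zero.mp this with h | h
    · exact h
    · exact absurd h hq2
  rcases mul_eq_zero.mp (hc1.trans hp1) with h | h
  · exact h
  · exact absurd h hq1

lemma zR_def (α : K) : zR α = algebraMap K[X] (RatFunc K) (X - C α) := rfl

lemma ratDeriv_one' : ratDeriv (1 : RatFunc K) = 0 := by
  have := ratDeriv_algebraMap (1 : K[X])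
  simpa using this

lemma ratDeriv_zR (α : K) : ratDeriv (zR α) = 1 := by
  rw [zR_def, ratDeriv_algebraMap]
  simp

lemma ratDeriv_zpow (α : K) (m : ℤ) :
    ratDeriv (zR α ^ m) =
      algebraMap K[X] (RatFunc K) (C ((m : ℤ) : K)) * zR α ^ (m - 1) := by
  have hz := zR_ne_zero α
  induction m using Int.induction_on with
  | zero => simpa using ratDeriv_one'
  | succ n ih =>
    rw [zpow_add_one₀ hz, ratDeriv_mul, ih, ratDeriv_zR]
    have hC : (algebraMap K[X] (RatFunc K)) (C ((((n : ℤ) + 1) : ℤ) : K)) =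
        (algebraMap K[X] (RatFunc K)) (C (((n : ℤ) : ℤ) : K)) + 1 := by
      have : ((((n : ℤ) + 1) : ℤ) : K) = (((n : ℤ) : ℤ) : K) + 1 := by push_cast; ring
      rw [this, C_add, C_1, map_add, map_one]
    rw [hC, add_sub_cancel_right]
    have hzz : zR α ^ ((n : ℤ) - 1) * zR α = zR α ^ (n : ℤ) := by
      rw [← zpow_add_one₀ hz, sub_add_cancel]
    calc algebraMap K[X] (RatFunc K) (C (((n : ℤ) : ℤ) : K)) * zR α ^ ((n : ℤ) - 1) * zR α
          + zR α ^ (n : ℤ) * 1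
        = algebraMap K[X] (RatFunc K) (C (((n : ℤ) : ℤ) : K)) * (zR α ^ ((n : ℤ) - 1) * zR α)
          + zR α ^ (n : ℤ) := by ring
      _ = (algebraMap K[X] (RatFunc K) (C (((n : ℤ) : ℤ) : K)) + 1) * zR α ^ (n : ℤ) := by
          rw [hzz]; ring
  | pred n ih =>
    have h1 : zR α ^ (-(n : ℤ)) = zR α ^ (-(n : ℤ) - 1) * zR α := by
      rw [← zpow_add_one₀ hz, sub_add_cancel]
    have h2 := congrArg ratDeriv h1
    rw [ih, ratDeriv_mul, ratDeriv_zR] at h2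
    apply mul_right_cancel₀ hz
    have hC : (algebraMap K[X] (RatFunc K)) (C (((-(n : ℤ) - 1) : ℤ) : K)) =
        (algebraMap K[X] (RatFunc K)) (C (((-(n : ℤ)) : ℤ) : K)) - 1 := by
      have : (((-(n : ℤ) - 1) : ℤ) : K) = (((-(n : ℤ)) : ℤ) : K) - 1 := by push_cast; ring
      rw [this, C_sub, C_1, map_sub, map_one]
    rw [hC]
    have hzz : zR α ^ (-(n : ℤ) - 1 - 1) * zR α = zR α ^ (-(n : ℤ) - 1) := by
      rw [← zpow_add_one₀ hz, sub_add_cancel]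
    rw [mul_assoc, hzz]
    linear_combination -h2

lemma lead_ratDeriv {α : K} {m : ℤ} {c : K} {f : RatFunc K} (hf : Lead α m c f) :
    Lead α (m - 1) (((m : ℤ) : K) * c) (ratDeriv f) := by
  obtain ⟨p, q, hq, hf1, hc⟩ := hf
  have hq0 : q ≠ 0 := fun h => hq (by simp [h])
  have hz := zR_ne_zero α
  have haq : algebraMap K[X] (RatFunc K) q ≠ 0 := RatFunc.algebraMap_ne_zero hq0
  refine ⟨C (((m : ℤ) : K)) * p * q + (X - C α) * (derivative p * q - p * derivative q), q ^ 2,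
    by simp [hq], ?_, ?_⟩
  · rw [hf1, ratDeriv_mul, ratDeriv_zpow, ratDeriv_div p q hq0]
    have hzm : zR α ^ m = zR α ^ (m - 1) * zR α := by
      rw [← zpow_add_one₀ hz, sub_add_cancel]
    rw [hzm]
    simp only [zR_def, map_mul, map_add, map_sub, map_pow, RatFunc.algebraMap_X,
      RatFunc.algebraMap_C]
    field_simp
  · simp only [eval_add, eval_mul, eval_sub, eval_pow, eval_C, eval_X]
    linear_combination (((m : ℤ) : K) * q.eval α) * hc

lemma lead_iterate {α : K} {m : ℤ} {c : K} {f : RatFunc K} (hf : Lead α m c f) (n : ℕ) :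
    Lead α (m - n) ((∏ t ∈ Finset.range n, (((m : ℤ) : K) - (t : K))) * c) (ratDeriv^[n] f) := by
  induction n with
  | zero => simpa using hf
  | succ n ih =>
    rw [Function.iterate_succ_apply']
    have := lead_ratDeriv ih
    have harith : (m - (n : ℤ)) - 1 = m - ((n + 1 : ℕ) : ℤ) := by push_cast; ring
    rw [harith] at this
    convert this using 1
    rw [Finset.prod_range_succ]
    push_cast
    ring

lemma lead_sum {α : K} {m : ℤ} {s : Finset ℕ} {c : ℕ → K} {f : ℕ → RatFunc K}
    (h : ∀ i ∈ s, Lead α m (c i) (f i)) :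
    Lead α m (∑ i ∈ s, c i) (∑ i ∈ s, f i) := by
  classical
  induction s using Finset.induction_on with
  | empty => simpa using lead_zero α m
  | insert x s hx ih =>
    rw [Finset.sum_insert hx, Finset.sum_insert hx]
    exact lead_add (h _ (Finset.mem_insert_self _ _))
      (ih fun i hi => h i (Finset.mem_insert_of_mem hi))

lemma lead_polyMul (α : K) (n : ℕ) (w : K[X]) :
    Lead α (n : ℤ) (w.eval α) (algebraMap K[X] (RatFunc K) ((X - C α) ^ n * w)) := by
  refine ⟨w, 1, by simp, ?_, by simp⟩
  rw [map_mul, map_pow, map_one, div_one, ← zR_def, zpow_natCast]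

lemma lead_algebraMap (α : K) (w : K[X]) :
    Lead α 0 (w.eval α) (algebraMap K[X] (RatFunc K) w) := by
  have := lead_polyMul α 0 w
  simpa using this

lemma lead_exists {α : K} {f : RatFunc K} (hf : f ≠ 0) :
    ∃ m c, c ≠ 0 ∧ Lead α m c f := by
  have hnum : f.num ≠ 0 := RatFunc.num_ne_zero hf
  have hden : f.denom ≠ 0 := f.denom_ne_zero
  obtain ⟨p, hp, hpd⟩ := f.num.exists_eq_pow_rootMultiplicity_mul_and_not_dvd hnum α
  obtain ⟨q, hq, hqd⟩ := f.denom.exists_eq_pow_rootMultiplicity_mul_and_not_dvd hden α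
  have hpe : p.eval α ≠ 0 := fun h => hpd (dvd_iff_isRoot.mpr h)
  have hqe : q.eval α ≠ 0 := fun h => hqd (dvd_iff_isRoot.mpr h)
  set s := f.num.rootMultiplicity α
  set t := f.denom.rootMultiplicity α
  refine ⟨(s : ℤ) - (t : ℤ), p.eval α / q.eval α, div_ne_zero hpe hqe, p, q, hqe, ?_,
    div_mul_cancel₀ _ hqe⟩
  have hz := zR_ne_zero α
  rw [← f.num_div_denom, hp, hq, map_mul, map_mul, map_pow, map_pow, ← zR_def,
    zpow_sub₀ hz, zpow_natCast, zpow_natCast]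
  rw [div_mul_div_comm]

lemma lead_regAt {α : K} {m : ℤ} {c : K} {f : RatFunc K} (hf : Lead α m c f) (hm : 0 ≤ m) :
    f.denom.eval α ≠ 0 := by
  obtain ⟨p, q, hq, hf1, hc⟩ := hf
  have hq0 : q ≠ 0 := fun h => hq (by simp [h])
  have hdvd : f.denom ∣ q := by
    rw [RatFunc.denom_dvd hq0]
    refine ⟨(X - C α) ^ m.toNat * p, ?_⟩
    rw [hf1, map_mul, map_pow, ← zR_def, mul_div_assoc]
    congr 1
    rw [← zpow_natCast, Int.toNat_of_nonneg hm]
  obtain ⟨e, he⟩ := hdvd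
  intro h0
  apply hq
  rw [he, eval_mul, h0, zero_mul]

noncomputable def Lop (r : ℕ) (qc : ℕ → K[X]) (p : K[X]) : K[X] :=
  ∑ i ∈ Finset.range (r + 1), qc i * derivative^[i] p

lemma ratDeriv_iterate_algebraMap (n : ℕ) (p : K[X]) :
    ratDeriv^[n] (algebraMap K[X] (RatFunc K) p) =
      algebraMap K[X] (RatFunc K) (derivative^[n] p) := by
  induction n generalizing p with
  | zero => rfl
  | succ n ih =>
    rw [Function.iterate_succ_apply, ratDeriv_algebraMap, ih,
      Function.iterate_succ_apply]

lemma applyOp_algebraMap (r : ℕ) (qc : ℕ → K[X]) (p : K[X]) :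
    applyOp r qc (algebraMap K[X] (RatFunc K) p) =
      algebraMap K[X] (RatFunc K) (Lop r qc p) := by
  rw [applyOp, Lop, map_sum]
  refine Finset.sum_congr rfl fun i _ => ?_
  rw [ratDeriv_iterate_algebraMap, map_mul]

lemma iterate_derivative_add' (k : ℕ) (p q : K[X]) :
    derivative^[k] (p + q) = derivative^[k] p + derivative^[k] q := by
  induction k generalizing p q with
  | zero => rfl
  | succ k ih => rw [Function.iterate_succ_apply, derivative_add, ih,
      Function.iterate_succ_apply, Function.iterate_succ_apply]

lemma Lop_add (r : ℕ) (qc : ℕ → K[X]) (p q : K[X]) :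
    Lop r qc (p + q) = Lop r qc p + Lop r qc q := by
  rw [Lop, Lop, Lop, ← Finset.sum_add_distrib]
  refine Finset.sum_congr rfl fun i _ => ?_
  rw [iterate_derivative_add', mul_add]

lemma Lop_C_mul (r : ℕ) (qc : ℕ → K[X]) (c : K) (p : K[X]) :
    Lop r qc (C c * p) = C c * Lop r qc p := by
  rw [Lop, Lop, Finset.mul_sum]
  refine Finset.sum_congr rfl fun i _ => ?_
  rw [iterate_derivative_C_mul]
  ring

lemma iter_deriv_factor (α : K) :
    ∀ (i : ℕ) (k : ℕ), i ≤ k → ∀ u : K[X], ∃ w : K[X],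
      derivative^[i] ((X - C α) ^ k * u) = (X - C α) ^ (k - i) * w := by
  intro i
  induction i with
  | zero => exact fun k _ u => ⟨u, by simp⟩
  | succ i ih =>
    intro k hk u
    have hk1 : 1 ≤ k := le_trans (Nat.succ_le_succ (Nat.zero_le i)) hk
    have hder : derivative ((X - C α) ^ k * u) =
        (X - C α) ^ (k - 1) * ((k : K[X]) * u + (X - C α) * derivative u) := by
      rw [derivative_mul, derivative_pow, derivative_X_sub_C]
      have hsplit : (X - C α) ^ k = (X - C α) ^ (k - 1) * (X - C α) := by
        rw [← pow_succ]
        congr 1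
        omega
      rw [hsplit]
      simp only [C_eq_natCast]
      ring
    rw [Function.iterate_succ_apply, hder]
    obtain ⟨w, hw⟩ := ih (k - 1) (by omega) ((k : K[X]) * u + (X - C α) * derivative u)
    exact ⟨w, by rw [hw, show k - 1 - i = k - (i + 1) from by omega]⟩

lemma approx [CharZero K] (r : ℕ) (qc : ℕ → K[X]) (α : K) (hLα : (qc r).eval α ≠ 0)
    (j : ℕ) : ∀ N : ℕ, ∃ F u g : K[X],
      F = (X - C α) ^ j + (X - C α) ^ r * u ∧ Lop r qc F = (X - C α) ^ N * g := by
  intro N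
  induction N with
  | zero => exact ⟨(X - C α) ^ j, 0, Lop r qc ((X - C α) ^ j), by simp, by simp⟩
  | succ N ih =>
    obtain ⟨F, u, g, hF, hL⟩ := ih
    set zp : K[X] := X - C α with hzp
    set h : K[X] := ∑ i ∈ Finset.range (r + 1),
      qc i * ((N + r).descFactorial i : K[X]) * zp ^ (r - i) with hh
    have hLopPow : Lop r qc (zp ^ (N + r)) = zp ^ N * h := by
      rw [Lop, hh, Finset.mul_sum]
      refine Finset.sum_congr rfl fun i hi => ?_
      have hir : i ≤ r := by
        have := Finset.mem_range.mp hi; omega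
      rw [hzp, iterate_derivative_X_sub_pow, nsmul_eq_mul,
        show N + r - i = N + (r - i) from by omega, pow_add]
      push_cast
      ring
    have hhα : h.eval α = (qc r).eval α * ((N + r).descFactorial r : K) := by
      rw [hh, eval_finset_sum]
      rw [Finset.sum_eq_single r]
      · simp [hzp]
      · intro i hi hir
        have : r - i ≠ 0 := by
          have := Finset.mem_range.mp hi; omega
        simp [hzp, zero_pow this]
      · intro hr
        exact absurd (Finset.self_mem_range_succ r) hr
    have hdesc : ((N + r).descFactorial r : K) ≠ 0 := by
      rw [Nat.cast_ne_zero]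
      intro h0
      have := Nat.descFactorial_eq_zero_iff_lt.mp h0
      omega
    have hhα0 : h.eval α ≠ 0 := by
      rw [hhα]; exact mul_ne_zero hLα hdesc
    set c : K := -(g.eval α) / h.eval α with hc
    have hroot : (g + C c * h).eval α = 0 := by
      rw [eval_add, eval_mul, eval_C, hc]
      field_simp
      ring
    obtain ⟨g', hg'⟩ := dvd_iff_isRoot.mpr hroot
    refine ⟨F + C c * zp ^ (N + r), u + C c * zp ^ N, g', ?_, ?_⟩
    · rw [hF, hzp]
      ring
    · rw [Lop_add, hL, Lop_C_mul, hLopPow, pow_succ]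
      calc zp ^ N * g + C c * (zp ^ N * h) = zp ^ N * (g + C c * h) := by ring
        _ = zp ^ N * (zp * g') := by rw [hg']
        _ = zp ^ N * zp * g' := by ring

theorem main_thm {K : Type*} [Field K] [CharZero K]
    (r rB : ℕ) (pM qL : ℕ → K[X]) (a b : ℕ → RatFunc K)
    (hq : qL r ≠ 0) (α : K)
    (hMα : Polynomial.eval α (pM r) ≠ 0) (hLα : Polynomial.eval α (qL r) ≠ 0)
    (hcomp : ∀ f : RatFunc K,
      applyOp r pM (∑ i ∈ Finset.range r, a i * ratDeriv^[i] f) =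
        ∑ j ∈ Finset.range (rB + 1), b j * ratDeriv^[j] (applyOp r qL f)) :
    ∀ i < r, Polynomial.eval α (a i).denom ≠ 0 := by
  classical
  by_contra hcon
  push_neg at hcon
  obtain ⟨i₀, hi₀r, hi₀⟩ := hcon
  set S := (Finset.range r).filter (fun i => a i ≠ 0) with hSdef
  have hS : i₀ ∈ S := by
    refine Finset.mem_filter.mpr ⟨Finset.mem_range.mpr hi₀r, ?_⟩
    intro h0
    rw [h0] at hi₀
    simp at hi₀
  have hSne : S.Nonempty := ⟨i₀, hS⟩
  have hex : ∀ i, a i ≠ 0 → ∃ mc : ℤ × K, mc.2 ≠ 0 ∧ Lead α mc.1 mc.2 (a i) := by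
    intro i hi
    obtain ⟨m, c, hc, h⟩ := lead_exists hi
    exact ⟨(m, c), hc, h⟩
  set mc : ℕ → ℤ × K := fun i => if h : a i ≠ 0 then Classical.choose (hex i h) else (0, 0)
    with hmc
  have hmcspec : ∀ i ∈ S, (mc i).2 ≠ 0 ∧ Lead α (mc i).1 (mc i).2 (a i) := by
    intro i hi
    have hai := (Finset.mem_filter.mp hi).2
    simp only [hmc, dif_pos hai]
    exact Classical.choose_spec (hex i hai)
  set m : ℤ := (S.image (fun i => (mc i).1)).min' (hSne.image _) with hm
  have hmin : ∀ i ∈ S, m ≤ (mc i).1 := fun i hi =>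
    Finset.min'_le _ _ (Finset.mem_image_of_mem _ hi)
  have hTne : ((S.filter (fun i => (mc i).1 = m))).Nonempty := by
    obtain ⟨x, hx, hxe⟩ := Finset.mem_image.mp
      (Finset.min'_mem (S.image fun i => (mc i).1) (hSne.image _))
    exact ⟨x, Finset.mem_filter.mpr ⟨hx, hxe⟩⟩
  set j : ℕ := (S.filter (fun i => (mc i).1 = m)).max' hTne with hj
  have hjmem := Finset.max'_mem (S.filter (fun i => (mc i).1 = m)) hTne
  have hjS : j ∈ S := (Finset.mem_filter.mp hjmem).1
  have hjm : (mc j).1 = m := (Finset.mem_filter.mp hjmem).2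
  have hjr : j < r := Finset.mem_range.mp (Finset.mem_filter.mp hjS).1
  have hmax : ∀ i ∈ S, j < i → m + 1 ≤ (mc i).1 := by
    intro i hi hji
    rcases eq_or_lt_of_le (hmin i hi) with he | hlt
    · exfalso
      have : i ∈ S.filter (fun i => (mc i).1 = m) := Finset.mem_filter.mpr ⟨hi, he.symm⟩
      exact absurd (Finset.le_max' _ _ this) (by omega)
    · omega
  have hm0 : m < 0 := by
    by_contra hge
    push_neg at hge
    have h1 := hmcspec i₀ hS
    have h2 : (0 : ℤ) ≤ (mc i₀).1 := le_trans hge (hmin _ hS)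
    exact lead_regAt h1.2 h2 hi₀
  set cj : K := (mc j).2 with hcj
  have hcj0 : cj ≠ 0 := (hmcspec j hjS).1
  clear hjmem hj hm hmc
  clear_value mc m j cj
  -- β for b
  have hbex : ∀ t : ℕ, ∃ mt : ℤ, ∃ d, Lead α mt d (b t) := by
    intro t
    by_cases h : b t = 0
    · exact ⟨0, 0, h ▸ lead_zero α 0⟩
    · obtain ⟨mt, d, _, hl⟩ := lead_exists h
      exact ⟨mt, d, hl⟩
  set βf : ℕ → ℤ := fun t => Classical.choose (hbex t) with hβf
  set β : ℤ := (Finset.range (rB + 1)).inf' ⟨0, by simp⟩ βf with hβdef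
  have hβ : ∀ t ∈ Finset.range (rB + 1), ∃ d, Lead α β d (b t) := by
    intro t ht
    obtain ⟨d, hd⟩ := Classical.choose_spec (hbex t)
    exact lead_le hd (Finset.inf'_le βf ht)
  clear hβdef hβf
  clear_value β βf
  clear βf
  -- choose N
  set N : ℕ := rB + (m - r + 2 - β).toNat with hN
  have hNrB : rB ≤ N := by omega
  have hNbig : m - r + 2 ≤ β + (N : ℤ) - rB := by
    have h1 : (m - r + 2 - β) ≤ ((m - r + 2 - β).toNat : ℤ) := Int.self_le_toNat _
    have h2 : (N : ℤ) = (rB : ℤ) + ((m - r + 2 - β).toNat : ℤ) := by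
      rw [hN]; push_cast; ring
    omega
  clear hN
  clear_value N
  obtain ⟨F, u, g, hF, hLF⟩ := approx r qL α hLα j N
  have hmain := hcomp (algebraMap K[X] (RatFunc K) F)
  -- LHS : the inner sum A F
  have hAF : Lead α m ((j.factorial : K) * cj)
      (∑ i ∈ Finset.range r, a i * ratDeriv^[i] (algebraMap K[X] (RatFunc K) F)) := by
    have hsum := lead_sum (α := α) (m := m) (s := Finset.range r)
      (c := fun i => if i = j then (j.factorial : K) * cj else 0)
      (f := fun i => a i * ratDeriv^[i] (algebraMap K[X] (RatFunc K) F)) ?_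
    · rw [Finset.sum_ite_eq' (Finset.range r) j] at hsum
      simpa [Finset.mem_range.mpr hjr] using hsum
    intro i hi
    have hir : i < r := Finset.mem_range.mp hi
    rw [ratDeriv_iterate_algebraMap, hF, iterate_derivative_add']
    obtain ⟨w, hw⟩ := iter_deriv_factor α i r (by omega) u
    rw [hw, iterate_derivative_X_sub_pow, map_add, mul_add]
    by_cases hiS : i ∈ S
    · obtain ⟨hci0, hlead⟩ := hmcspec i hiS
      have hpart2 : Lead α m 0
          (a i * algebraMap K[X] (RatFunc K) ((X - C α) ^ (r - i) * w)) := by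
        have := lead_mul hlead (lead_polyMul α (r - i) w)
        apply lead_weaken this
        have h1 : m ≤ (mc i).1 := hmin i hiS
        have h2 : 1 ≤ r - i := by omega
        have : (1 : ℤ) ≤ ((r - i : ℕ) : ℤ) := by exact_mod_cast h2
        omega
      have hdesc : (j.descFactorial i) • ((X - C α) ^ (j - i) : K[X]) =
          (X - C α) ^ (j - i) * ((j.descFactorial i : K[X])) := by
        rw [nsmul_eq_mul]; ring
      rw [hdesc]
      have hpart1base := lead_mul hlead (lead_polyMul α (j - i) ((j.descFactorial i : K[X])))
      by_cases hij : i = j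
      · rw [if_pos hij]
        rw [← hij] at hpart1base
        have h0 : (mc i).1 + ((i - i : ℕ) : ℤ) = m := by rw [hij]; simp [hjm]
        rw [h0] at hpart1base
        have h2 : Polynomial.eval α ((i.descFactorial i : K[X])) = (i.factorial : K) := by
          simp [Nat.descFactorial_self]
        rw [h2] at hpart1base
        have hc2 : (mc i).2 = cj := by rw [hij]; exact hcj.symm
        rw [hc2] at hpart1base
        have hcomb := lead_add hpart1base hpart2
        rw [← hij]
        simpa [mul_comm] using hcomb
      · rw [if_neg hij]
        have hpart1 : Lead α m 0 (a i * algebraMap K[X] (RatFunc K)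
            ((X - C α) ^ (j - i) * ((j.descFactorial i : K[X])))) := by
          apply lead_weaken hpart1base
          rcases lt_or_gt_of_ne hij with hlt | hgt
          · have h1 : m ≤ (mc i).1 := hmin i hiS
            have h2 : 1 ≤ j - i := by omega
            have : (1 : ℤ) ≤ ((j - i : ℕ) : ℤ) := by exact_mod_cast h2
            omega
          · have h1 : m + 1 ≤ (mc i).1 := hmax i hiS hgt
            have : (0 : ℤ) ≤ ((j - i : ℕ) : ℤ) := by positivity
            omega
        have := lead_add hpart1 hpart2
        simpa using this
    · have hai : a i = 0 := by
        by_contra hne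
        exact hiS (Finset.mem_filter.mpr ⟨hi, hne⟩)
      have hij : i ≠ j := fun h => hiS (h ▸ hjS)
      rw [if_neg hij, hai]
      simpa using lead_zero α m
  -- full LHS
  set CC : K := (pM r).eval α * ((∏ t ∈ Finset.range r, (((m : ℤ) : K) - (t : K))) *
    ((j.factorial : K) * cj)) with hCC
  have hLHS : Lead α (m - r) CC
      (applyOp r pM (∑ i ∈ Finset.range r, a i * ratDeriv^[i]
        (algebraMap K[X] (RatFunc K) F))) := by
    rw [applyOp]
    have hsum := lead_sum (α := α) (m := m - r) (s := Finset.range (r + 1))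
      (c := fun i => if i = r then CC else 0)
      (f := fun i => algebraMap K[X] (RatFunc K) (pM i) * ratDeriv^[i]
        (∑ i ∈ Finset.range r, a i * ratDeriv^[i] (algebraMap K[X] (RatFunc K) F))) ?_
    · rw [Finset.sum_ite_eq' (Finset.range (r + 1)) r] at hsum
      simpa [Finset.self_mem_range_succ r] using hsum
    intro i hi
    have hir : i ≤ r := by
      have := Finset.mem_range.mp hi; omega
    have hit := lead_mul (lead_algebraMap α (pM i)) (lead_iterate hAF i)
    by_cases hieq : i = r
    · subst hieq
      rw [if_pos rfl]
      rw [hCC]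
      simpa using hit
    · rw [if_neg hieq]
      apply lead_weaken hit
      have : (i : ℤ) < (r : ℤ) := by exact_mod_cast lt_of_le_of_ne hir hieq
      omega
  -- RHS
  have hRHS : Lead α (m - r + 1) 0
      (∑ t ∈ Finset.range (rB + 1), b t * ratDeriv^[t]
        (applyOp r qL (algebraMap K[X] (RatFunc K) F))) := by
    have hsum := lead_sum (α := α) (m := m - r + 1) (s := Finset.range (rB + 1))
      (c := fun t => (0 : K))
      (f := fun t => b t * ratDeriv^[t]
        (applyOp r qL (algebraMap K[X] (RatFunc K) F))) ?_
    · simpa using hsum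
    intro t ht
    have htrB : t ≤ rB := by
      have := Finset.mem_range.mp ht; omega
    obtain ⟨d, hd⟩ := hβ t ht
    rw [applyOp_algebraMap, hLF, ratDeriv_iterate_algebraMap]
    obtain ⟨w, hw⟩ := iter_deriv_factor α t N (by omega) g
    rw [hw]
    have := lead_mul hd (lead_polyMul α (N - t) w)
    apply lead_weaken this
    have hcast : ((N - t : ℕ) : ℤ) = (N : ℤ) - (t : ℤ) := by
      rw [Nat.cast_sub (by omega)]
    rw [hcast]
    omega
  -- contradiction
  rw [hmain] at hLHS
  have hCC0 : CC = 0 := by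
    have h2 : Lead α ((m - r) + 1) 0 _ := hRHS
    exact lead_contra hLHS h2
  rw [hCC] at hCC0
  rcases mul_eq_zero.mp hCC0 with h | h
  · exact hMα h
  rcases mul_eq_zero.mp h with h | h
  · rw [Finset.prod_eq_zero_iff] at h
    obtain ⟨t, htm, hteq⟩ := h
    have h0 : ((m - t : ℤ) : K) = 0 := by push_cast; linear_combination hteq
    rw [Int.cast_eq_zero] at h0
    omega
  rcases mul_eq_zero.mp h with h | h
  · exact Nat.factorial_ne_zero j (by exact_mod_cast h)
  · exact hcj0 h

end Aux

/-- if `M∘A = B∘L` where `L` has order `r`, `A = ∑_{i<r} aᵢ ∂ⁱ` has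
order at most `r−1`, and `α` is a singularity of neither `M` nor `L` (their leading
coefficients do not vanish at `α`), then no coefficient `aᵢ` of `A` has a pole at `α`. -/
theorem coefficients_regular_at_ordinary_point {K : Type*} [Field K] [CharZero K]
    [IsAlgClosed K]
    (r rB : ℕ) (pM qL : ℕ → K[X]) (a b : ℕ → RatFunc K)
    (hq : qL r ≠ 0) (α : K)
    (hMα : Polynomial.eval α (pM r) ≠ 0) (hLα : Polynomial.eval α (qL r) ≠ 0)
    (hcomp : ∀ f : RatFunc K,
      applyOp r pM (∑ i ∈ Finset.range r, a i * ratDeriv^[i] f) =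
        ∑ j ∈ Finset.range (rB + 1), b j * ratDeriv^[j] (applyOp r qL f)) :
    ∀ i < r, Polynomial.eval α (a i).denom ≠ 0 := by
  exact main_thm r rB pM qL a b hq α hMα hLα hcomp
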